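/- Let X be a separable Banach space, U ⊆ X open, ξ a Dini gauge with mean slope ζ(r) = ∫₀^r ξ(ρ)/ρ dρ, r₀ > 0, and let C ⊆ X be a compact connected set which is (ξ,r₀) almost minimizing in U. Then for every x ∈ C ∩ U, the function r ↦ exp(ζ(r)) · H^1(C ∩ B(x,r)) / (2r) is nondecreasing on (0, min{r₀, dist(x, X\\U)}). -/

import Mathlib

open MeasureTheory

/-- A gauge: a nondecreasing function on `(0,∞)`, nonnegative, tending to `0` at `0⁺`. -/
def IsGauge (ξ : ℝ → ℝ) : Prop :=
  MonotoneOn ξ (Set.Ioi 0) ∧ (∀ r : ℝ, 0 < r → 0 ≤ ξ r) ∧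
    Filter.Tendsto ξ (nhdsWithin 0 (Set.Ioi 0)) (nhds 0)

/-- A Dini gauge: a gauge whose mean slope `∫₀^r ξ(ρ)/ρ dρ` is finite for each `r > 0`. -/
def IsDiniGauge (ξ : ℝ → ℝ) : Prop :=
  IsGauge ξ ∧ ∀ r : ℝ, 0 < r → IntegrableOn (fun ρ => ξ ρ / ρ) (Set.Ioc 0 r)

/-- `C` is a compact connected set of finite length, `(ξ, r₀)` almost minimizing in `U`. -/
def AlmostMinimizing {X : Type*} [NormedAddCommGroup X] [NormedSpace ℝ X]
    [MeasurableSpace X] [BorelSpace X]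
    (ξ : ℝ → ℝ) (r₀ : ℝ) (U : Set X) (C : Set X) : Prop :=
  IsCompact C ∧ IsConnected C ∧ μH[1] C < ⊤ ∧
    ∀ x ∈ C ∩ U, ∀ r : ℝ, 0 < r → r ≤ r₀ → Metric.closedBall x r ⊆ U →
      ∀ C' : Set X, IsCompact C' → IsConnected C' →
        C' \ Metric.closedBall x r = C \ Metric.closedBall x r →
        μH[1] (C ∩ Metric.closedBall x r) ≤
          ENNReal.ofReal (1 + ξ r) * μH[1] (C' ∩ Metric.closedBall x r)

open Set
open scoped ENNReal NNReal

lemma log_ge_aux {u : ℝ} (hu : -(1/2) ≤ u) : u - 2 * u^2 ≤ Real.log (1 + u) := by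
  have h1u : (0:ℝ) < 1 + u := by linarith
  have hlog : (1 + u - 1) / (1 + u) ≤ Real.log (1 + u) := by
    have := Real.log_le_sub_one_of_pos (x := (1+u)⁻¹) (by positivity)
    rw [Real.log_inv] at this
    calc (1 + u - 1)/(1+u) = 1 - (1+u)⁻¹ := by field_simp
    _ ≤ Real.log (1+u) := by linarith
  have key : u - 2*u^2 ≤ (1 + u - 1) / (1 + u) := by
    rw [← sub_nonneg]
    have : (1 + u - 1) / (1+u) - (u - 2*u^2) = (u^2 * (1 + 2*u)) / (1 + u) := by
      field_simp; ring
    rw [this]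
    apply div_nonneg _ (le_of_lt h1u)
    nlinarith
  linarith

lemma gronwall_aux (M w : ℝ → ℝ) (r₁ r₂ : ℝ) (h1 : 0 < r₁) (h12 : r₁ ≤ r₂)
    (hint : IntegrableOn w (Set.Ioc r₁ r₂))
    (hMpos : ∀ t ∈ Set.Icc r₁ r₂, 0 < M t)
    (W : ℝ) (hW : 0 ≤ W) (hwbd : ∀ t ∈ Set.Ioc r₁ r₂, |w t| ≤ W)
    (key : ∀ a b, r₁ ≤ a → a ≤ b → b ≤ r₂ → M a * ∫ t in Set.Ioc a b, w t ≤ M b - M a) :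
    ∫ t in Set.Ioc r₁ r₂, w t ≤ Real.log (M r₂) - Real.log (M r₁) := by
  set I : ℝ → ℝ → ℝ := fun a b => ∫ t in Set.Ioc a b, w t with hI
  clear_value I
  set J := r₂ - r₁ with hJ
  clear_value J
  have hJ0 : 0 ≤ J := by simp [hJ]; linarith
  -- integral additivity
  have Iadd : ∀ a b c, r₁ ≤ a → a ≤ b → b ≤ c → c ≤ r₂ → I a b + I b c = I a c := by
    intro a b c ha hab hbc hc
    have h1' : IntegrableOn w (Set.Ioc a b) := hint.mono_set (Ioc_subset_Ioc ha (hbc.trans hc))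
    have h2' : IntegrableOn w (Set.Ioc b c) := hint.mono_set (Ioc_subset_Ioc (ha.trans hab) hc)
    rw [hI]
    simp only
    rw [← setIntegral_union (Ioc_disjoint_Ioc_of_le le_rfl) measurableSet_Ioc h1' h2',
      Set.Ioc_union_Ioc_eq_Ioc hab hbc]
  have Ibound : ∀ a b, r₁ ≤ a → a ≤ b → b ≤ r₂ → |I a b| ≤ W * (b - a) := by
    intro a b ha hab hb
    have hsub : Set.Ioc a b ⊆ Set.Ioc r₁ r₂ := Ioc_subset_Ioc ha hb
    have h1' : IntegrableOn w (Set.Ioc a b) := hint.mono_set hsub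
    have := norm_setIntegral_le_of_norm_le_const (μ := volume) (s := Set.Ioc a b) (f := w)
      (C := W) (by rw [Real.volume_Ioc]; exact ENNReal.ofReal_lt_top)
      (fun t ht => by rw [Real.norm_eq_abs]; exact hwbd t (hsub ht))
    rw [Real.norm_eq_abs, Real.volume_real_Ioc_of_le hab] at this
    rw [hI]
    exact this
  -- it suffices to prove the bound up to ε
  suffices hsuf : I r₁ r₂ ≤ Real.log (M r₂) - Real.log (M r₁) by rw [hI] at hsuf; exact hsuf
  by_contra hcon
  push_neg at hcon
  obtain ⟨ε, hε, hcon⟩ : ∃ ε > 0, Real.log (M r₂) - Real.log (M r₁) + ε < I r₁ r₂ :=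
    ⟨(I r₁ r₂ - (Real.log (M r₂) - Real.log (M r₁)))/2, by linarith, by linarith⟩
  obtain ⟨n, hn⟩ := exists_nat_ge (max (max 1 (2*W^2*J^2/ε)) (2*W*J))
  have hn1 : (1:ℝ) ≤ n := le_trans (le_max_of_le_left (le_max_left _ _)) hn
  have hnpos : (0:ℝ) < n := by linarith
  have hne : (n:ℝ) ≠ 0 := ne_of_gt hnpos
  have hnn : n ≠ 0 := by exact_mod_cast hne
  set e := W * J / n with he
  clear_value e
  have he0 : 0 ≤ e := by rw [he]; positivity
  have hehalf : e ≤ 1/2 := by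
    have h2 : 2*W*J ≤ n := le_trans (le_max_of_le_right le_rfl) hn
    rw [he, div_le_iff₀ hnpos]
    nlinarith
  have heps : 2 * (n:ℝ) * e^2 ≤ ε := by
    have h2 : 2*W^2*J^2/ε ≤ n := le_trans (le_max_of_le_left (le_max_right _ _)) hn
    rw [div_le_iff₀ hε] at h2
    have : 2 * (n:ℝ) * e^2 = 2*W^2*J^2/n := by rw [he]; field_simp
    rw [this, div_le_iff₀ hnpos]
    nlinarith
  set t : ℕ → ℝ := fun i => r₁ + (i:ℝ) * J / n with htdef
  clear_value t
  have ht0 : t 0 = r₁ := by rw [htdef]; simp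
  have htn : t n = r₂ := by rw [htdef]; field_simp; rw [hJ]; ring
  have trange : ∀ i, i ≤ n → r₁ ≤ t i ∧ t i ≤ r₂ := by
    intro i hi
    constructor
    · rw [htdef]; simp only [le_add_iff_nonneg_right]; positivity
    · rw [htdef]
      have : (i:ℝ) ≤ n := by exact_mod_cast hi
      have h3 : (i:ℝ) * J / n ≤ J := by
        rw [div_le_iff₀ hnpos]; nlinarith
      simp only [hJ] at h3 ⊢; linarith
  have tstep : ∀ i, t (i+1) - t i = J / n := by
    intro i; rw [htdef]; push_cast; field_simp; ring
  have tmono : ∀ i, t i ≤ t (i+1) := by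
    intro i
    have h := tstep i
    have h2 : 0 ≤ J / (n:ℝ) := by positivity
    linarith
  set u : ℕ → ℝ := fun i => I (t i) (t (i+1)) with hu
  clear_value u
  -- bounds on each increment
  have hubd : ∀ i, i + 1 ≤ n → |u i| ≤ e := by
    intro i hi
    have h1' := (trange i (by omega)).1
    have h2' := (trange (i+1) hi).2
    have hIb := Ibound (t i) (t (i+1)) h1' (tmono i) h2'
    rw [tstep i] at hIb
    rw [he, hu]
    simp only
    calc |I (t i) (t (i+1))| ≤ W * (J/(n:ℝ)) := hIb
    _ = W * J / (n:ℝ) := by ring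
  -- step inequality
  have hstep : ∀ i, i + 1 ≤ n →
      Real.log (1 + u i) ≤ Real.log (M (t (i+1))) - Real.log (M (t i)) := by
    intro i hi
    have h1' := (trange i (by omega)).1
    have h2' := (trange (i+1) hi).2
    have hMi : 0 < M (t i) := hMpos _ ⟨h1', le_trans (tmono i) h2'⟩
    have hMi1 : 0 < M (t (i+1)) := hMpos _ ⟨le_trans h1' (tmono i), h2'⟩
    have hueq : u i = I (t i) (t (i+1)) := by rw [hu]
    have hk : M (t i) * u i ≤ M (t (i+1)) - M (t i) := by
      rw [hueq, hI]; exact key (t i) (t (i+1)) h1' (tmono i) h2'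
    have hui : |u i| ≤ e := hubd i hi
    have hupos : 0 < 1 + u i := by
      obtain ⟨h3, h4⟩ := abs_le.1 hui; linarith
    have hMieq : M (t i) * (1 + u i) ≤ M (t (i+1)) := by
      have hr : M (t i) * (1 + u i) = M (t i) + M (t i) * u i := by ring
      linarith
    calc Real.log (1 + u i) = Real.log (M (t i) * (1 + u i)) - Real.log (M (t i)) := by
          rw [Real.log_mul (ne_of_gt hMi) (ne_of_gt hupos)]; ring
    _ ≤ Real.log (M (t (i+1))) - Real.log (M (t i)) := by
          have := Real.log_le_log (by positivity) hMieq
          linarith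
  -- telescoping sums
  have hsumlog : ∑ i ∈ Finset.range n, (Real.log (M (t (i+1))) - Real.log (M (t i)))
      = Real.log (M r₂) - Real.log (M r₁) := by
    rw [Finset.sum_range_sub (fun i => Real.log (M (t i))), ht0, htn]
  have hsumu : ∑ i ∈ Finset.range n, u i = I r₁ r₂ := by
    have : ∀ i, i + 1 ≤ n → I r₁ (t (i+1)) - I r₁ (t i) = u i := by
      intro i hi
      rw [hu]
      simp only
      have h1' := (trange i (by omega)).1
      have h2' := (trange (i+1) hi).2
      have := Iadd r₁ (t i) (t (i+1)) le_rfl h1' (tmono i) h2'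
      linarith
    have h0 : I r₁ (t 0) = 0 := by
      rw [ht0, hI]; simp
    calc ∑ i ∈ Finset.range n, u i
        = ∑ i ∈ Finset.range n, (I r₁ (t (i+1)) - I r₁ (t i)) := by
          apply Finset.sum_congr rfl
          intro i hi
          rw [this i (Finset.mem_range.1 hi)]
    _ = I r₁ (t n) - I r₁ (t 0) := Finset.sum_range_sub (fun i => I r₁ (t i)) n
    _ = I r₁ r₂ := by rw [htn, h0]; ring
  -- combine
  have hfinal : I r₁ r₂ - (n:ℝ) * (2 * e^2) ≤ Real.log (M r₂) - Real.log (M r₁) := by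
    have h2' : ∀ i ∈ Finset.range n, u i - 2 * e^2 ≤ Real.log (M (t (i+1))) - Real.log (M (t i)) := by
      intro i hi
      have h1' : u i - 2 * (u i)^2 ≤ Real.log (1 + u i) := by
        apply log_ge_aux
        obtain ⟨h3, h4⟩ := abs_le.1 (hubd i (Finset.mem_range.1 hi))
        linarith
      have hsq : (u i)^2 ≤ e^2 := by
        have hb := hubd i (Finset.mem_range.1 hi)
        calc (u i)^2 = |u i|^2 := (sq_abs (u i)).symm
        _ ≤ e^2 := pow_le_pow_left₀ (abs_nonneg _) hb 2
      have h5 := hstep i (Finset.mem_range.1 hi)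
      linarith
    have hsum := Finset.sum_le_sum h2'
    rw [hsumlog, Finset.sum_sub_distrib, hsumu, Finset.sum_const, Finset.card_range,
      nsmul_eq_mul] at hsum
    linarith
  have hre : (n:ℝ) * (2 * e^2) = 2 * (n:ℝ) * e^2 := by ring
  linarith

noncomputable def layerCount {X : Type*} (A : Set X) (f : X → ℝ) (t : ℝ) : ℝ≥0∞ :=
  ⨆ (F : Finset X) (_ : (F : Set X) ⊆ A ∩ f ⁻¹' {t}), (F.card : ℝ≥0∞)

lemma le_layerCount {X : Type*} {A : Set X} {f : X → ℝ} {t : ℝ} (F : Finset X)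
    (hF : (F : Set X) ⊆ A ∩ f ⁻¹' {t}) : (F.card : ℝ≥0∞) ≤ layerCount A f t :=
  le_iSup₂ (f := fun (F : Finset X) (_ : (F : Set X) ⊆ A ∩ f ⁻¹' {t}) => (F.card : ℝ≥0∞)) F hF

lemma layerCount_congr {X : Type*} {A B : Set X} {f : X → ℝ} {t : ℝ}
    (h : A ∩ f ⁻¹' {t} = B ∩ f ⁻¹' {t}) : layerCount A f t = layerCount B f t := by
  unfold layerCount
  rw [h]

lemma eilenberg {X : Type*} [MetricSpace X] [MeasurableSpace X] [BorelSpace X]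
    (A : Set X) (f : X → ℝ) (hf : LipschitzWith 1 f) :
    ∫⁻ t, layerCount A f t ≤ μH[1] A := by
  classical
  by_cases hA : μH[1] A = ⊤
  · rw [hA]; exact le_top
  have hcov : ∀ n : ℕ, ∃ c : ℕ → Set X, (A ⊆ ⋃ i, c i) ∧
      (∀ i, EMetric.diam (c i) ≤ ENNReal.ofReal ((1:ℝ)/(n+1))) ∧
      ∑' i, ⨆ _ : (c i).Nonempty, EMetric.diam (c i) ^ (1:ℝ) ≤
        μH[1] A + ENNReal.ofReal ((1:ℝ)/(n+1)) := by
    intro n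
    have hpos : (0:ℝ≥0∞) < ENNReal.ofReal ((1:ℝ)/(n+1)) := by
      rw [ENNReal.ofReal_pos]; positivity
    have hlt : (⨅ (c : ℕ → Set X) (_ : A ⊆ ⋃ i, c i)
        (_ : ∀ i, EMetric.diam (c i) ≤ ENNReal.ofReal ((1:ℝ)/(n+1))),
        ∑' i, ⨆ _ : (c i).Nonempty, EMetric.diam (c i) ^ (1:ℝ)) <
        μH[1] A + ENNReal.ofReal ((1:ℝ)/(n+1)) := by
      apply lt_of_le_of_lt ?_ (ENNReal.lt_add_right hA (ne_of_gt hpos))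
      calc (⨅ (c : ℕ → Set X) (_ : A ⊆ ⋃ i, c i)
          (_ : ∀ i, EMetric.diam (c i) ≤ ENNReal.ofReal ((1:ℝ)/(n+1))),
          ∑' i, ⨆ _ : (c i).Nonempty, EMetric.diam (c i) ^ (1:ℝ))
          ≤ ⨆ (r : ℝ≥0∞) (_ : 0 < r), ⨅ (c : ℕ → Set X) (_ : A ⊆ ⋃ i, c i)
            (_ : ∀ i, EMetric.diam (c i) ≤ r),
            ∑' i, ⨆ _ : (c i).Nonempty, EMetric.diam (c i) ^ (1:ℝ) :=
            le_iSup₂ (f := fun (r : ℝ≥0∞) (_ : 0 < r) => ⨅ (c : ℕ → Set X) (_ : A ⊆ ⋃ i, c i)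
              (_ : ∀ i, EMetric.diam (c i) ≤ r),
              ∑' i, ⨆ _ : (c i).Nonempty, EMetric.diam (c i) ^ (1:ℝ))
              (ENNReal.ofReal ((1:ℝ)/(n+1))) hpos
      _ = μH[1] A := (MeasureTheory.Measure.hausdorffMeasure_apply 1 A).symm
    rw [iInf_lt_iff] at hlt
    obtain ⟨c, hlt⟩ := hlt
    rw [iInf_lt_iff] at hlt
    obtain ⟨hc1, hlt⟩ := hlt
    rw [iInf_lt_iff] at hlt
    obtain ⟨hc2, hlt⟩ := hlt
    exact ⟨c, hc1, hc2, hlt.le⟩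
  choose cov hcov1 hcov2 hcov3 using hcov
  have hbddim : ∀ n i, Bornology.IsBounded (f '' cov n i) := by
    intro n i
    rw [← not_not (a := Bornology.IsBounded _), ← Metric.ediam_eq_top_iff_unbounded]
    intro htop
    have h1 : Metric.ediam (f '' cov n i) ≤ 1 * EMetric.diam (cov n i) := hf.ediam_image_le _
    rw [one_mul, htop, top_le_iff] at h1
    have := hcov2 n i
    rw [h1] at this
    exact ENNReal.ofReal_ne_top (top_le_iff.mp this)
  set J : ℕ → ℕ → Set ℝ := fun n i => Icc (sInf (f '' cov n i)) (sSup (f '' cov n i)) with hJ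
  set g : ℕ → ℝ → ℝ≥0∞ := fun n s => ∑' i, (J n i).indicator (fun _ => (1:ℝ≥0∞)) s with hg
  have hgmeas : ∀ n, Measurable (g n) :=
    fun n => Measurable.ennreal_tsum fun i => measurable_const.indicator measurableSet_Icc
  have hvol : ∀ n i, volume (J n i) ≤ ⨆ _ : (cov n i).Nonempty, EMetric.diam (cov n i) ^ (1:ℝ) := by
    intro n i
    rcases (cov n i).eq_empty_or_nonempty with he | hne
    · rw [hJ]
      simp [he, Real.sInf_empty, Real.sSup_empty]
    · have hne' : (f '' cov n i).Nonempty := hne.image f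
      have : volume (J n i) = Metric.ediam (f '' cov n i) := by
        rw [hJ]
        simp only
        rw [Real.volume_Icc, Real.ediam_eq (hbddim n i)]
      rw [this, iSup_pos hne, ENNReal.rpow_one]
      calc EMetric.diam (f '' cov n i) ≤ 1 * EMetric.diam (cov n i) := hf.ediam_image_le _
      _ = EMetric.diam (cov n i) := one_mul _
  have hgint : ∀ n, ∫⁻ s, g n s ≤ μH[1] A + ENNReal.ofReal ((1:ℝ)/(n+1)) := by
    intro n
    rw [hg]
    simp only
    rw [lintegral_tsum (fun i => (measurable_const.indicator measurableSet_Icc).aemeasurable)]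
    calc ∑' i, ∫⁻ s, (J n i).indicator (fun _ => (1:ℝ≥0∞)) s
        = ∑' i, volume (J n i) := by
          congr 1; funext i
          rw [lintegral_indicator_const measurableSet_Icc, one_mul]
    _ ≤ ∑' i, ⨆ _ : (cov n i).Nonempty, EMetric.diam (cov n i) ^ (1:ℝ) :=
          ENNReal.tsum_le_tsum (fun i => hvol n i)
    _ ≤ μH[1] A + ENNReal.ofReal ((1:ℝ)/(n+1)) := hcov3 n
  have hpoint : ∀ s, layerCount A f s ≤ Filter.liminf (fun n => g n s) Filter.atTop := by
    intro s
    apply iSup₂_le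
    intro F hF
    rcases F.eq_empty_or_nonempty with rfl | hFne
    · simp
    obtain ⟨d, hd0, hd⟩ : ∃ d, 0 < d ∧ ∀ p ∈ F, ∀ q ∈ F, p ≠ q → d ≤ dist p q := by
      by_cases hsing : ∀ p ∈ F, ∀ q ∈ F, p = q
      · exact ⟨1, one_pos, fun p hp q hq hne => absurd (hsing p hp q hq) hne⟩
      · push_neg at hsing
        obtain ⟨p₀, hp₀, q₀, hq₀, hne₀⟩ := hsing
        have hTne : ((F ×ˢ F).filter (fun pq => pq.1 ≠ pq.2)).Nonempty :=
          ⟨(p₀, q₀), Finset.mem_filter.2 ⟨Finset.mem_product.2 ⟨hp₀, hq₀⟩, hne₀⟩⟩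
        refine ⟨((F ×ˢ F).filter (fun pq => pq.1 ≠ pq.2)).inf' hTne (fun pq => dist pq.1 pq.2),
          ?_, ?_⟩
        · rw [Finset.lt_inf'_iff]
          rintro ⟨p, q⟩ hpq
          simp only [Finset.mem_filter, Finset.mem_product] at hpq
          exact dist_pos.2 hpq.2
        · intro p hp q hq hne
          have hmem : (p, q) ∈ (F ×ˢ F).filter (fun pq => pq.1 ≠ pq.2) :=
            Finset.mem_filter.2 ⟨Finset.mem_product.2 ⟨hp, hq⟩, hne⟩
          exact Finset.inf'_le (fun pq => dist pq.1 pq.2) hmem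
    have hev : ∀ᶠ n in Filter.atTop, (F.card : ℝ≥0∞) ≤ g n s := by
      obtain ⟨N, hN⟩ := exists_nat_one_div_lt hd0
      rw [Filter.eventually_atTop]
      refine ⟨N, fun n hn => ?_⟩
      have hsmall : (1:ℝ)/(n+1) < d := by
        apply lt_of_le_of_lt ?_ hN
        apply div_le_div_of_nonneg_left one_pos.le (by positivity)
        have : (N:ℝ) ≤ n := by exact_mod_cast hn
        linarith
      have hchoice : ∀ y : X, ∃ i, y ∈ A → y ∈ cov n i := by
        intro y
        by_cases hy : y ∈ A
        · obtain ⟨i, hi⟩ := Set.mem_iUnion.1 (hcov1 n hy)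
          exact ⟨i, fun _ => hi⟩
        · exact ⟨0, fun h => absurd h hy⟩
      choose ι hι using hchoice
      have hmemcov : ∀ y ∈ F, y ∈ cov n (ι y) := fun y hy => hι y (hF hy).1
      have hinj : Set.InjOn ι (F : Set X) := by
        intro p hp q hq heq
        by_contra hne
        have h1 : edist p q ≤ EMetric.diam (cov n (ι p)) :=
          EMetric.edist_le_diam_of_mem (hmemcov p hp) (heq ▸ hmemcov q hq)
        have h2 : edist p q ≤ ENNReal.ofReal ((1:ℝ)/(n+1)) := h1.trans (hcov2 n (ι p))
        rw [edist_dist, ENNReal.ofReal_le_ofReal_iff (by positivity)] at h2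
        have := hd p hp q hq hne
        linarith
      have hmemJ : ∀ y ∈ F, s ∈ J n (ι y) := by
        intro y hy
        have hfy : f y = s := (hF hy).2
        rw [hJ]
        constructor
        · rw [← hfy]
          exact csInf_le (hbddim n (ι y)).bddBelow (Set.mem_image_of_mem f (hmemcov y hy))
        · rw [← hfy]
          exact le_csSup (hbddim n (ι y)).bddAbove (Set.mem_image_of_mem f (hmemcov y hy))
      calc (F.card : ℝ≥0∞) = ((F.image ι).card : ℝ≥0∞) := by
            rw [Finset.card_image_of_injOn hinj]
      _ = ∑ i ∈ F.image ι, (1:ℝ≥0∞) := by simp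
      _ = ∑ i ∈ F.image ι, (J n i).indicator (fun _ => (1:ℝ≥0∞)) s := by
            apply Finset.sum_congr rfl
            intro i hi
            obtain ⟨y, hy, rfl⟩ := Finset.mem_image.1 hi
            rw [Set.indicator_of_mem (hmemJ y hy)]
      _ ≤ ∑' i, (J n i).indicator (fun _ => (1:ℝ≥0∞)) s := ENNReal.sum_le_tsum _
      _ = g n s := by rw [hg]
    have := Filter.liminf_le_liminf hev
    rwa [Filter.liminf_const] at this
  calc ∫⁻ s, layerCount A f s
      ≤ ∫⁻ s, Filter.liminf (fun n => g n s) Filter.atTop := lintegral_mono hpoint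
  _ ≤ Filter.liminf (fun n => ∫⁻ s, g n s) Filter.atTop := lintegral_liminf_le hgmeas
  _ ≤ Filter.liminf (fun n : ℕ => μH[1] A + ENNReal.ofReal ((1:ℝ)/(n+1))) Filter.atTop :=
      Filter.liminf_le_liminf (Filter.Eventually.of_forall hgint)
  _ = μH[1] A := by
      have h0 : Filter.Tendsto (fun n : ℕ => ENNReal.ofReal ((1:ℝ)/(n+1))) Filter.atTop (nhds 0) := by
        rw [← ENNReal.ofReal_zero]
        apply ENNReal.tendsto_ofReal
        exact tendsto_one_div_add_atTop_nhds_zero_nat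
      have : Filter.Tendsto (fun n : ℕ => μH[1] A + ENNReal.ofReal ((1:ℝ)/(n+1)))
          Filter.atTop (nhds (μH[1] A)) := by
        simpa using Filter.Tendsto.add (tendsto_const_nhds (x := μH[1] A) (f := Filter.atTop)) h0
      exact this.liminf_eq

lemma component_meets_sphere {X : Type*} [MetricSpace X]
    (C : Set X) (hcomp : IsCompact C) (hconn : IsPreconnected C)
    (x : X) (hxC : x ∈ C) (t : ℝ) (ht : 0 < t)
    (z : X) (hz : z ∈ C \ Metric.ball x t) :
    ∃ y ∈ connectedComponentIn (C \ Metric.ball x t) z, dist y x = t := by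
  by_contra hcon
  push_neg at hcon
  set F := C \ Metric.ball x t with hFdef
  have hFsub : F ⊆ C := diff_subset
  have hFcomp : IsCompact F := hcomp.diff Metric.isOpen_ball
  haveI : CompactSpace F := isCompact_iff_compactSpace.mp hFcomp
  set z' : F := ⟨z, hz⟩ with hz'
  have himg : connectedComponentIn F z = Subtype.val '' connectedComponent z' :=
    connectedComponentIn_eq_image hz
  set Sph : Set F := {w : F | dist (w : X) x = t} with hSphdef
  have hSphClosed : IsClosed Sph :=
    isClosed_eq (continuous_subtype_val.dist continuous_const) continuous_const
  have hdisj : ∀ w ∈ connectedComponent z', w ∉ Sph := by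
    intro w hw1 hw2
    exact hcon (w : X) (himg ▸ Set.mem_image_of_mem _ hw1) hw2
  obtain ⟨V, hVclopen, hzV, hVSph⟩ : ∃ V : Set F, IsClopen V ∧ z' ∈ V ∧ V ∩ Sph = ∅ := by
    have hSphcomp : IsCompact Sph := hSphClosed.isCompact
    have hcover : Sph ⊆ ⋃ (Z : {Z : Set F // IsClopen Z ∧ z' ∈ Z}), (↑Z : Set F)ᶜ := by
      intro w hw
      rw [Set.mem_iUnion]
      by_contra hnot
      push_neg at hnot
      have hwcc : w ∈ connectedComponent z' := by
        rw [connectedComponent_eq_iInter_isClopen z']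
        rw [Set.mem_iInter]
        intro Z
        have := hnot Z
        rwa [Set.notMem_compl_iff] at this
      exact hdisj w hwcc hw
    obtain ⟨s, hs⟩ := hSphcomp.elim_finite_subcover _ (fun Z => Z.2.1.compl.isOpen) hcover
    refine ⟨⋂ Z ∈ s, (Z : {Z : Set F // IsClopen Z ∧ z' ∈ Z}).1, ?_, ?_, ?_⟩
    · exact isClopen_biInter_finset (fun Z _ => Z.2.1)
    · rw [Set.mem_iInter₂]; exact fun Z _ => Z.2.2
    · rw [eq_empty_iff_forall_notMem]
      rintro w ⟨hw1, hw2⟩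
      obtain ⟨Z, hZs, hZw⟩ := Set.mem_iUnion₂.1 (hs hw2)
      rw [Set.mem_iInter₂] at hw1
      exact hZw (hw1 Z hZs)
  -- push down to the ambient space
  set A : Set X := Subtype.val '' V with hAdef
  have hAne : A.Nonempty := ⟨z, ⟨z', hzV, rfl⟩⟩
  have hAcomp : IsCompact A := (hVclopen.1.isCompact).image continuous_subtype_val
  have hAclosed : IsClosed A := hAcomp.isClosed
  have hAsub : A ⊆ F := by
    rintro w ⟨w', _, rfl⟩; exact w'.2
  have hAgt : ∀ w ∈ A, t < dist w x := by
    rintro w ⟨w', hw', rfl⟩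
    have h1 : ¬ dist (w' : X) x < t :=
      fun hlt => (w'.2).2 (Metric.mem_ball.2 hlt)
    have h2 : dist (w' : X) x ≠ t := by
      intro heq
      have : (w' : F) ∈ V ∩ Sph := ⟨hw', heq⟩
      rw [hVSph] at this
      exact this
    rcases lt_trichotomy (dist (w' : X) x) t with h | h | h
    · exact absurd h h1
    · exact absurd h h2
    · exact h
  -- A is open in C
  obtain ⟨O, hOopen, hOV⟩ := isOpen_induced_iff.mp hVclopen.2
  have hAO : A = F ∩ O := by
    rw [hAdef, ← hOV, Subtype.image_preimage_coe]
  set O' : Set X := O ∩ {w | t < dist w x} with hO'def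
  have hO'open : IsOpen O' :=
    hOopen.inter (isOpen_lt continuous_const ((continuous_id.dist continuous_const)))
  have hAO' : A = C ∩ O' := by
    apply Set.Subset.antisymm
    · intro w hw
      refine ⟨hFsub (hAsub hw), ?_, hAgt w hw⟩
      rw [hAO] at hw
      exact hw.2
    · rintro w ⟨hwC, hwO, hwgt⟩
      rw [hAO]
      exact ⟨⟨hwC, fun hball => absurd (Metric.mem_ball.1 hball) (not_lt.2 (le_of_lt hwgt))⟩, hwO⟩
  -- contradiction with connectedness of C
  have hxnA : x ∉ A := fun hxA => lt_irrefl (0:ℝ) (by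
    have := hAgt x hxA
    rw [dist_self] at this
    linarith [ht])
  have := hconn O' Aᶜ hO'open hAclosed.isOpen_compl
    (by
      intro w hw
      by_cases hwA : w ∈ A
      · left; rw [hAO'] at hwA; exact hwA.2
      · right; exact hwA)
    (by
      obtain ⟨w, hw⟩ := hAne
      exact ⟨w, hFsub (hAsub hw), by rw [hAO'] at hw; exact hw.2⟩)
    ⟨x, hxC, hxnA⟩
  obtain ⟨w, hwC, hwO', hwnA⟩ := this
  exact hwnA (by rw [hAO']; exact ⟨hwC, hwO'⟩)

lemma hausdorff_singleton_zero {X : Type*} [MetricSpace X] [MeasurableSpace X] [BorelSpace X]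
    (x : X) : μH[1] ({x} : Set X) = 0 := by
  have h : ({x} : Set X) = (fun _ : ℝ => x) '' {0} := by simp
  rw [h]
  have hL : LipschitzWith 0 (fun _ : ℝ => x) := LipschitzWith.const x
  apply le_antisymm _ zero_le
  calc μH[1] ((fun _ : ℝ => x) '' {0})
      ≤ ((0:ℝ≥0) : ℝ≥0∞) ^ (1:ℝ) * μH[1] ({0} : Set ℝ) :=
        hL.hausdorffMeasure_image_le (by norm_num) _
  _ = 0 := by rw [ENNReal.rpow_one]; simp

lemma measure_zero_of_subset {X : Type*} [NormedAddCommGroup X] [NormedSpace ℝ X]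
    [MeasurableSpace X] [BorelSpace X]
    {ξ : ℝ → ℝ} {r₀ : ℝ} {U : Set X} {C : Set X}
    (hC : AlmostMinimizing ξ r₀ U C) (x : X) (hx : x ∈ C ∩ U)
    (t : ℝ) (ht0 : 0 < t) (htr₀ : t ≤ r₀) (hsub : Metric.closedBall x t ⊆ U)
    (hsubC : C ⊆ Metric.closedBall x t) :
    μH[1] (C ∩ Metric.closedBall x t) = 0 := by
  obtain ⟨hCcomp, hCconn, hCfin, hmin⟩ := hC
  have h := hmin x hx t ht0 htr₀ hsub {x} isCompact_singleton isConnected_singleton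
    (by rw [Set.diff_eq_empty.2 hsubC, Set.diff_eq_empty.2
      (Set.singleton_subset_iff.2 (Metric.mem_closedBall_self ht0.le))])
  have hsing : μH[1] (({x} : Set X) ∩ Metric.closedBall x t) = 0 :=
    le_antisymm ((measure_mono Set.inter_subset_left).trans
      (hausdorff_singleton_zero x).le) zero_le
  rw [hsing, mul_zero] at h
  exact le_antisymm h zero_le

lemma competitor_bound {X : Type*} [NormedAddCommGroup X] [NormedSpace ℝ X]
    [MeasurableSpace X] [BorelSpace X]
    {ξ : ℝ → ℝ} {r₀ : ℝ} {U : Set X} {C : Set X}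
    (hC : AlmostMinimizing ξ r₀ U C) (x : X) (hx : x ∈ C ∩ U)
    (t : ℝ) (ht0 : 0 < t) (htr₀ : t ≤ r₀) (hsub : Metric.closedBall x t ⊆ U)
    (hξt : 0 ≤ ξ t) (hout : ∃ y ∈ C, t < dist y x) :
    μH[1] (C ∩ Metric.closedBall x t) ≤
      ENNReal.ofReal (1 + ξ t) *
        (ENNReal.ofReal t * layerCount C (fun y => dist y x) t) := by
  classical
  obtain ⟨hCcomp, hCconn, hCfin, hmin⟩ := hC
  set f : X → ℝ := fun y => dist y x with hfdef
  set S : Set X := C ∩ f ⁻¹' {t} with hSdef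
  by_cases hSfin : S.Finite
  swap
  · -- infinitely many sphere points: the bound is trivial
    have htop : layerCount C f t = ⊤ := by
      apply ENNReal.eq_top_of_forall_nnreal_le
      intro r
      calc (r : ℝ≥0∞) ≤ ((⌈r⌉₊ : ℝ≥0) : ℝ≥0∞) := by
            exact_mod_cast ENNReal.coe_le_coe.2 (Nat.le_ceil r)
      _ = ((⌈r⌉₊ : ℕ) : ℝ≥0∞) := by norm_cast
      _ ≤ layerCount C f t := by
            obtain ⟨T, hTsub, hTfin, hTcard⟩ :=
              Set.Infinite.exists_subset_ncard_eq (hSfin : S.Infinite) ⌈r⌉₊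
            have hcard : hTfin.toFinset.card = ⌈r⌉₊ := by
              rw [← Set.ncard_eq_toFinset_card T hTfin]
              exact hTcard
            have := le_layerCount (A := C) (f := f) (t := t) hTfin.toFinset
              (by rw [Set.Finite.coe_toFinset]; exact hTsub.trans hSdef.subset)
            rwa [hcard] at this
    rw [htop]
    have h1 : ENNReal.ofReal t * (⊤:ℝ≥0∞) = ⊤ :=
      ENNReal.mul_top (ne_of_gt (ENNReal.ofReal_pos.2 ht0))
    have h2 : (0:ℝ≥0∞) < ENNReal.ofReal (1 + ξ t) :=
      ENNReal.ofReal_pos.2 (by linarith)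
    rw [h1, ENNReal.mul_top (ne_of_gt h2)]
    exact le_top
  -- finite case
  set F : Finset X := hSfin.toFinset with hFdef
  have hFS : (F : Set X) = S := hSfin.coe_toFinset
  -- the sphere is nonempty by the intermediate value theorem
  obtain ⟨y, hyC, hyt⟩ := hout
  have hfx : f x = 0 := dist_self x
  have hIVT : Set.Icc (f x) (f y) ⊆ f '' C :=
    hCconn.isPreconnected.intermediate_value hx.1 hyC
      ((continuous_id.dist continuous_const).continuousOn)
  obtain ⟨z, hzC, hzt⟩ : ∃ z ∈ C, f z = t := by
    have : t ∈ Set.Icc (f x) (f y) := by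
      rw [hfx]; exact ⟨ht0.le, hyt.le⟩
    obtain ⟨z, hzC, hzt⟩ := hIVT this
    exact ⟨z, hzC, hzt⟩
  have hzS : z ∈ S := ⟨hzC, hzt⟩
  have hzF : z ∈ F := by rw [← Finset.mem_coe, hFS]; exact hzS
  -- the competitor
  set cone : Set X := ⋃ y ∈ F, segment ℝ x y with hconedef
  set C' : Set X := (C \ Metric.ball x t) ∪ cone with hC'def
  have hSball : ∀ w ∈ S, w ∈ Metric.closedBall x t := by
    intro w hw
    rw [Metric.mem_closedBall]
    exact le_of_eq hw.2
  have hsegsub : ∀ w ∈ F, segment ℝ x w ⊆ Metric.closedBall x t := by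
    intro w hw
    apply (convex_closedBall x t).segment_subset (Metric.mem_closedBall_self ht0.le)
    apply hSball
    rw [← Finset.mem_coe, hFS] at hw
    exact hw
  have hsegcomp : ∀ w : X, IsCompact (segment ℝ x w) := by
    intro w
    rw [segment_eq_image']
    exact isCompact_Icc.image (continuous_const.add (continuous_id.smul continuous_const))
  have hC'comp : IsCompact C' := by
    apply (hCcomp.diff Metric.isOpen_ball).union
    exact F.finite_toSet.isCompact_biUnion (fun w _ => hsegcomp w)
  have hzt' : dist z x = t := hzt
  have hzball : z ∈ C \ Metric.ball x t :=
    ⟨hzC, fun hball => absurd (Metric.mem_ball.1 hball) (by rw [hzt']; exact lt_irrefl t)⟩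
  have hsegincone : ∀ y₀ ∈ F, segment ℝ x y₀ ⊆ cone := by
    intro y₀ h
    rw [hconedef]
    exact Set.subset_iUnion₂ (s := fun (i : X) (_ : i ∈ F) => segment ℝ x i) y₀ h
  have hconesub : cone ⊆ C' := Set.subset_union_right
  have hC'conn : IsConnected C' := by
    refine ⟨⟨z, Or.inl hzball⟩, ?_⟩
    apply isPreconnected_of_forall x
    intro w hw
    rcases hw with hw | hw
    · -- w in C \ ball: use its connected component
      obtain ⟨y₀, hy₀K, hy₀t⟩ :=
        component_meets_sphere C hCcomp hCconn.isPreconnected x hx.1 t ht0 w hw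
      have hy₀S : y₀ ∈ S :=
        ⟨diff_subset ((connectedComponentIn_subset _ _) hy₀K), hy₀t⟩
      have hy₀F : y₀ ∈ F := by rw [← Finset.mem_coe, hFS]; exact hy₀S
      refine ⟨connectedComponentIn (C \ Metric.ball x t) w ∪ segment ℝ x y₀, ?_, ?_, ?_, ?_⟩
      · apply Set.union_subset
        · exact (connectedComponentIn_subset _ _).trans Set.subset_union_left
        · exact (hsegincone y₀ hy₀F).trans hconesub
      · exact Or.inr (left_mem_segment ℝ x y₀)
      · exact Or.inl (mem_connectedComponentIn hw)
      · exact IsPreconnected.union y₀ hy₀K (right_mem_segment ℝ x y₀)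
          isPreconnected_connectedComponentIn (convex_segment x y₀).isPreconnected
    · -- w in the cone
      have hw' : w ∈ ⋃ y₀ ∈ F, segment ℝ x y₀ := by rw [← hconedef]; exact hw
      obtain ⟨y₀, hy₀F, hwseg⟩ := Set.mem_iUnion₂.1 hw'
      exact ⟨segment ℝ x y₀, (hsegincone y₀ hy₀F).trans hconesub,
        left_mem_segment ℝ x y₀, hwseg, (convex_segment x y₀).isPreconnected⟩
  have hconeball : cone ⊆ Metric.closedBall x t := by
    rw [hconedef]
    apply Set.iUnion₂_subset
    intro w hw
    exact hsegsub w hw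
  have hside : C' \ Metric.closedBall x t = C \ Metric.closedBall x t := by
    apply Set.Subset.antisymm
    · rintro w ⟨hw, hwB⟩
      rcases hw with hw | hw
      · exact ⟨hw.1, hwB⟩
      · exact absurd (hconeball hw) hwB
    · rintro w ⟨hwC, hwB⟩
      exact ⟨Or.inl ⟨hwC, fun hball => hwB (Metric.ball_subset_closedBall hball)⟩, hwB⟩
  -- measure of the competitor inside the ball
  have hC'sub : C' ∩ Metric.closedBall x t ⊆ cone := by
    rintro w ⟨hw, hwB⟩
    rcases hw with hw | hw
    · have h1 : t ≤ dist w x := by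
        by_contra hlt
        exact hw.2 (Metric.mem_ball.2 (lt_of_not_ge hlt))
      have h2 : dist w x = t := le_antisymm (Metric.mem_closedBall.1 hwB) h1
      have hwF : w ∈ F := by
        rw [← Finset.mem_coe, hFS]
        exact ⟨hw.1, h2⟩
      rw [hconedef]
      exact Set.mem_biUnion hwF (right_mem_segment ℝ x w)
    · exact hw
  have hseg : ∀ w ∈ F, μH[1] (segment ℝ x w) ≤ ENNReal.ofReal t := by
    intro w hw
    have hwS : w ∈ S := by rw [← Finset.mem_coe, hFS] at hw; exact hw
    have hLip : LipschitzWith ‖w - x‖₊ (fun θ : ℝ => x + θ • (w - x)) := by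
      apply LipschitzWith.of_dist_le_mul
      intro a b
      have heq : (x + a • (w - x)) - (x + b • (w - x)) = (a - b) • (w - x) := by
        rw [sub_smul]; abel
      calc dist (x + a • (w - x)) (x + b • (w - x))
          = ‖(a - b) • (w - x)‖ := by rw [dist_eq_norm, heq]
      _ = |a - b| * ‖w - x‖ := by rw [norm_smul, Real.norm_eq_abs]
      _ = (‖w - x‖₊ : ℝ) * dist a b := by rw [Real.dist_eq, coe_nnnorm]; ring
      _ ≤ (‖w - x‖₊ : ℝ) * dist a b := le_rfl
    calc μH[1] (segment ℝ x w)
        = μH[1] ((fun θ : ℝ => x + θ • (w - x)) '' Set.Icc 0 1) := by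
          rw [segment_eq_image']
    _ ≤ (‖w - x‖₊ : ℝ≥0∞) ^ (1:ℝ) * μH[1] (Set.Icc (0:ℝ) 1) :=
          hLip.hausdorffMeasure_image_le (by norm_num) _
    _ = ENNReal.ofReal t := by
          rw [ENNReal.rpow_one, MeasureTheory.hausdorffMeasure_real, Real.volume_Icc,
            ← enorm_eq_nnnorm, ← ofReal_norm, ← dist_eq_norm]
          have hwt : dist w x = t := hwS.2
          rw [hwt]
          norm_num
  have hcone : μH[1] (C' ∩ Metric.closedBall x t) ≤ (F.card : ℝ≥0∞) * ENNReal.ofReal t := by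
    calc μH[1] (C' ∩ Metric.closedBall x t) ≤ μH[1] cone := measure_mono hC'sub
    _ = μH[1] (⋃ w ∈ F, segment ℝ x w) := by rw [hconedef]
    _ ≤ ∑ w ∈ F, μH[1] (segment ℝ x w) := measure_biUnion_finset_le _ _
    _ ≤ ∑ w ∈ F, ENNReal.ofReal t := Finset.sum_le_sum hseg
    _ = (F.card : ℝ≥0∞) * ENNReal.ofReal t := by rw [Finset.sum_const, nsmul_eq_mul]
  have hmain := hmin x hx t ht0 htr₀ hsub C' hC'comp hC'conn hside
  calc μH[1] (C ∩ Metric.closedBall x t)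
      ≤ ENNReal.ofReal (1 + ξ t) * μH[1] (C' ∩ Metric.closedBall x t) := hmain
  _ ≤ ENNReal.ofReal (1 + ξ t) * ((F.card : ℝ≥0∞) * ENNReal.ofReal t) :=
      mul_le_mul_right hcone _
  _ ≤ ENNReal.ofReal (1 + ξ t) * (ENNReal.ofReal t * layerCount C f t) := by
      apply mul_le_mul_right
      rw [mul_comm]
      apply mul_le_mul_right
      exact le_layerCount F (by rw [hFS, hSdef])

theorem stmt_10 {X : Type*} [NormedAddCommGroup X] [NormedSpace ℝ X]
    [TopologicalSpace.SeparableSpace X] [MeasurableSpace X] [BorelSpace X]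
    (U : Set X) (hU : IsOpen U) (ξ : ℝ → ℝ) (hξ : IsDiniGauge ξ)
    (ζ : ℝ → ℝ) (hζ : ∀ r : ℝ, ζ r = ∫ ρ in Set.Ioc (0:ℝ) r, ξ ρ / ρ)
    (r₀ : ℝ) (hr₀ : 0 < r₀) (C : Set X) (hC : AlmostMinimizing ξ r₀ U C)
    (x : X) (hx : x ∈ C ∩ U) :
    ∀ r₁ r₂ : ℝ, 0 < r₁ → r₁ ≤ r₂ →
      ENNReal.ofReal r₂ < min (ENNReal.ofReal r₀) (EMetric.infEdist x Uᶜ) →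
      ENNReal.ofReal (Real.exp (ζ r₁)) * μH[1] (C ∩ Metric.closedBall x r₁) /
          ENNReal.ofReal (2 * r₁) ≤
        ENNReal.ofReal (Real.exp (ζ r₂)) * μH[1] (C ∩ Metric.closedBall x r₂) /
          ENNReal.ofReal (2 * r₂) := by
  intro r₁ r₂ hr₁ h12 hlt
  obtain ⟨hxC, hxU⟩ := hx
  have hr₂ : 0 < r₂ := lt_of_lt_of_le hr₁ h12
  rw [lt_min_iff] at hlt
  obtain ⟨hltr₀, hltU⟩ := hlt
  have hr₂r₀ : r₂ < r₀ := (ENNReal.ofReal_lt_ofReal_iff hr₀).1 hltr₀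
  have hsubU : ∀ t : ℝ, t ≤ r₂ → Metric.closedBall x t ⊆ U := by
    intro t ht y hy
    by_contra hyU
    have h1 : EMetric.infEdist x Uᶜ ≤ edist x y := EMetric.infEdist_le_edist_of_mem hyU
    have h2 : edist x y ≤ ENNReal.ofReal r₂ := by
      rw [edist_dist]
      apply ENNReal.ofReal_le_ofReal
      calc dist x y = dist y x := dist_comm x y
      _ ≤ t := Metric.mem_closedBall.1 hy
      _ ≤ r₂ := ht
    exact absurd (lt_of_le_of_lt (h1.trans h2) hltU) (lt_irrefl _)
  obtain ⟨⟨hξmono, hξnonneg, _⟩, hξint⟩ := hξ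
  set m : ℝ → ℝ≥0∞ := fun t => μH[1] (C ∩ Metric.closedBall x t) with hm
  have hmfin : ∀ t, m t ≠ ⊤ :=
    fun t => (lt_of_le_of_lt (measure_mono Set.inter_subset_left) hC.2.2.1).ne
  have hmmono : ∀ a b, a ≤ b → m a ≤ m b := fun a b h =>
    measure_mono (Set.inter_subset_inter_right _ (Metric.closedBall_subset_closedBall h))
  by_cases hm0 : m r₁ = 0
  · have hz : μH[1] (C ∩ Metric.closedBall x r₁) = 0 := hm0
    rw [hz, mul_zero, ENNReal.zero_div]
    exact zero_le
  set M : ℝ → ℝ := fun t => (m t).toReal with hM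
  set w : ℝ → ℝ := fun t => (1 - ξ t) / t with hw
  have hMr₁pos : 0 < M r₁ := ENNReal.toReal_pos hm0 (hmfin r₁)
  have hMpos : ∀ t ∈ Set.Icc r₁ r₂, 0 < M t := by
    intro t ht
    apply ENNReal.toReal_pos _ (hmfin t)
    intro h0
    exact hm0 (le_antisymm (h0 ▸ hmmono r₁ t ht.1) zero_le)
  have hMmono : ∀ a b, a ≤ b → M a ≤ M b :=
    fun a b h => ENNReal.toReal_mono (hmfin b) (hmmono a b h)
  have hinv_int : IntegrableOn (fun t : ℝ => t⁻¹) (Set.Ioc r₁ r₂) := by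
    apply IntegrableOn.mono_set _ Set.Ioc_subset_Icc_self
    apply ContinuousOn.integrableOn_Icc
    exact continuousOn_id.inv₀ (fun t ht => ne_of_gt (lt_of_lt_of_le hr₁ ht.1))
  have hxi_int : IntegrableOn (fun t => ξ t / t) (Set.Ioc r₁ r₂) :=
    (hξint r₂ hr₂).mono_set (Set.Ioc_subset_Ioc hr₁.le le_rfl)
  have hweq : ∀ t : ℝ, w t = t⁻¹ - ξ t / t := by
    intro t
    rw [hw]
    simp only
    rw [sub_div, one_div]
  have hint : IntegrableOn w (Set.Ioc r₁ r₂) := by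
    have : w = fun t => t⁻¹ - ξ t / t := funext hweq
    rw [this]
    exact hinv_int.sub hxi_int
  set W : ℝ := (1 + ξ r₂) / r₁ with hW
  have hξr₂ : 0 ≤ ξ r₂ := hξnonneg r₂ hr₂
  have hW0 : 0 ≤ W := by rw [hW]; positivity
  have hwbd : ∀ t ∈ Set.Ioc r₁ r₂, |w t| ≤ W := by
    intro t ht
    have ht0 : 0 < t := lt_trans hr₁ ht.1
    have hξt : 0 ≤ ξ t := hξnonneg t ht0
    have hξle : ξ t ≤ ξ r₂ := hξmono (Set.mem_Ioi.2 ht0) (Set.mem_Ioi.2 hr₂) ht.2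
    rw [hw]
    simp only
    rw [abs_div, abs_of_pos ht0, hW]
    apply div_le_div₀ (by linarith) _ hr₁ ht.1.le
    rw [abs_le]
    constructor <;> linarith
  -- the function counting sphere points
  set f : X → ℝ := fun y => dist y x with hf
  have hflip : LipschitzWith 1 f := LipschitzWith.dist_left x
  -- the key differential inequality
  have key : ∀ a b, r₁ ≤ a → a ≤ b → b ≤ r₂ →
      M a * ∫ t in Set.Ioc a b, w t ≤ M b - M a := by
    intro a b ha hab hb
    have ha0 : 0 < a := lt_of_lt_of_le hr₁ ha
    have hMab : M a ≤ M b := hMmono a b hab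
    rcases le_or_gt (∫ t in Set.Ioc a b, w t) 0 with hneg | hposint
    · have := mul_nonpos_of_nonneg_of_nonpos (ENNReal.toReal_nonneg (a := m a)) hneg
      linarith
    set A : Set X := (C ∩ Metric.closedBall x b) \ Metric.closedBall x a with hA
    have hpoint : ∀ t ∈ Set.Ioc a b,
        ENNReal.ofReal (M a * max (w t) 0) ≤ layerCount A f t := by
      intro t ht
      have ht0 : 0 < t := lt_trans ha0 ht.1
      have htr₂ : t ≤ r₂ := ht.2.trans hb
      have hcongr : layerCount A f t = layerCount C f t := by
        apply layerCount_congr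
        ext y
        simp only [Set.mem_inter_iff, Set.mem_diff, Set.mem_preimage, Set.mem_singleton_iff]
        constructor
        · rintro ⟨⟨⟨hyC, _⟩, _⟩, hyt⟩
          exact ⟨hyC, hyt⟩
        · rintro ⟨hyC, hyt⟩
          have hyt' : dist y x = t := hyt
          refine ⟨⟨⟨hyC, ?_⟩, ?_⟩, hyt⟩
          · rw [Metric.mem_closedBall, hyt']
            exact ht.2
          · rw [Metric.mem_closedBall, hyt']
            exact not_le.2 ht.1
      rcases le_or_gt (w t) 0 with hw0 | hw0
      · rw [max_eq_right hw0, mul_zero, ENNReal.ofReal_zero]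
        exact zero_le
      have hwmax : max (w t) 0 = w t := max_eq_left hw0.le
      have hξt : 0 ≤ ξ t := hξnonneg t ht0
      have htr₀' : t ≤ r₀ := le_of_lt (lt_of_le_of_lt htr₂ hr₂r₀)
      have hout : ∃ y ∈ C, t < dist y x := by
        by_contra hno
        push_neg at hno
        have hsubC : C ⊆ Metric.closedBall x t :=
          fun y hy => Metric.mem_closedBall.2 (hno y hy)
        have hzero := measure_zero_of_subset ⟨hC.1, hC.2.1, hC.2.2.1, hC.2.2.2⟩ x ⟨hxC, hxU⟩
          t ht0 htr₀' (hsubU t htr₂) hsubC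
        have : m t = 0 := hzero
        exact hm0 (le_antisymm (this ▸ hmmono r₁ t (ha.trans ht.1.le)) zero_le)
      have hcomp := competitor_bound ⟨hC.1, hC.2.1, hC.2.2.1, hC.2.2.2⟩ x ⟨hxC, hxU⟩
        t ht0 htr₀' (hsubU t htr₂) hξt hout
      set c : ℝ≥0∞ := ENNReal.ofReal ((1 + ξ t) * t) with hc
      have hc0 : c ≠ 0 := ne_of_gt (ENNReal.ofReal_pos.2 (by nlinarith))
      have hctop : c ≠ ⊤ := ENNReal.ofReal_ne_top
      have hfact : ENNReal.ofReal (1 + ξ t) * (ENNReal.ofReal t * layerCount C f t)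
          = layerCount C f t * c := by
        rw [hc, ENNReal.ofReal_mul (by linarith), ← mul_assoc, mul_comm]
      have hma : ENNReal.ofReal (M a) ≤ layerCount C f t * c := by
        calc ENNReal.ofReal (M a) = m a := ENNReal.ofReal_toReal (hmfin a)
        _ ≤ m t := hmmono a t ht.1.le
        _ ≤ ENNReal.ofReal (1 + ξ t) * (ENNReal.ofReal t * layerCount C f t) := hcomp
        _ = layerCount C f t * c := hfact
      have hreal : (M a * w t) * ((1 + ξ t) * t) ≤ M a := by
        have hMa0 : 0 ≤ M a := ENNReal.toReal_nonneg
        have hwt : w t * ((1 + ξ t) * t) = (1 - ξ t) * (1 + ξ t) := by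
          rw [hw]
          simp only
          field_simp
        calc (M a * w t) * ((1 + ξ t) * t) = M a * (w t * ((1 + ξ t) * t)) := by ring
        _ = M a * ((1 - ξ t) * (1 + ξ t)) := by rw [hwt]
        _ ≤ M a * 1 := by
            apply mul_le_mul_of_nonneg_left _ hMa0
            nlinarith
        _ = M a := mul_one _
      have hXc : ENNReal.ofReal (M a * w t) * c ≤ ENNReal.ofReal (M a) := by
        rw [hc, ← ENNReal.ofReal_mul (by positivity)]
        exact ENNReal.ofReal_le_ofReal hreal
      rw [hcongr, hwmax]
      exact (ENNReal.mul_le_mul_iff_left hc0 hctop).1 (hXc.trans hma)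
    -- integrate the pointwise bound and use the coarea inequality
    have hIocsub : Set.Ioc a b ⊆ Set.Ioc r₁ r₂ := Set.Ioc_subset_Ioc ha hb
    have hintab : IntegrableOn w (Set.Ioc a b) := hint.mono_set hIocsub
    have hintmax : IntegrableOn (fun t => max (w t) 0) (Set.Ioc a b) := hintab.pos_part
    have hstep1 : M a * ∫ t in Set.Ioc a b, w t ≤ M a * ∫ t in Set.Ioc a b, max (w t) 0 := by
      apply mul_le_mul_of_nonneg_left _ ENNReal.toReal_nonneg
      exact integral_mono hintab hintmax (fun t => le_max_left _ _)
    have hannulus : m a + μH[1] A = m b := by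
      have hiad := measure_inter_add_diff (μ := μH[1]) (C ∩ Metric.closedBall x b)
        (measurableSet_closedBall (x := x) (ε := a))
      have h1 : (C ∩ Metric.closedBall x b) ∩ Metric.closedBall x a
          = C ∩ Metric.closedBall x a := by
        rw [Set.inter_assoc, Set.inter_eq_self_of_subset_right
          (Metric.closedBall_subset_closedBall hab)]
      rw [h1] at hiad
      exact hiad
    have hstep2 : ENNReal.ofReal (M a * ∫ t in Set.Ioc a b, max (w t) 0) ≤ m b - m a := by
      have hle : ENNReal.ofReal (M a * ∫ t in Set.Ioc a b, max (w t) 0) ≤ μH[1] A := by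
        calc ENNReal.ofReal (M a * ∫ t in Set.Ioc a b, max (w t) 0)
            = ENNReal.ofReal (∫ t in Set.Ioc a b, M a * max (w t) 0) := by
              rw [integral_const_mul]
        _ = ∫⁻ t in Set.Ioc a b, ENNReal.ofReal (M a * max (w t) 0) :=
              ofReal_integral_eq_lintegral_ofReal (hintmax.const_mul _)
                (Filter.Eventually.of_forall fun t =>
                  mul_nonneg ENNReal.toReal_nonneg (le_max_right _ _))
        _ ≤ ∫⁻ t in Set.Ioc a b, layerCount A f t := by
              apply lintegral_mono_ae
              rw [ae_restrict_iff' measurableSet_Ioc]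
              exact Filter.Eventually.of_forall hpoint
        _ ≤ ∫⁻ t, layerCount A f t := setLIntegral_le_lintegral _ _
        _ ≤ μH[1] A := eilenberg A f hflip
      calc ENNReal.ofReal (M a * ∫ t in Set.Ioc a b, max (w t) 0) ≤ μH[1] A := hle
      _ ≤ m b - m a := by
          rw [← hannulus]
          rw [ENNReal.add_sub_cancel_left (hmfin a)]
    -- convert to reals
    have hsub0 : 0 ≤ M b - M a := by linarith
    have hmba : m b - m a = ENNReal.ofReal (M b - M a) := by
      conv_lhs => rw [← ENNReal.ofReal_toReal (hmfin b), ← ENNReal.ofReal_toReal (hmfin a)]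
      rw [← ENNReal.ofReal_sub _ ENNReal.toReal_nonneg]
    rw [hmba] at hstep2
    have hreal2 : M a * ∫ t in Set.Ioc a b, max (w t) 0 ≤ M b - M a :=
      (ENNReal.ofReal_le_ofReal_iff hsub0).1 hstep2
    linarith
  -- Grönwall
  have hgron := gronwall_aux M w r₁ r₂ hr₁ h12 hint hMpos W hW0 hwbd key
  -- compute the integral of w
  have h1int : ∫ t in Set.Ioc r₁ r₂, (t : ℝ)⁻¹ = Real.log r₂ - Real.log r₁ := by
    rw [← intervalIntegral.integral_of_le h12, integral_inv_of_pos hr₁ hr₂,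
      Real.log_div (ne_of_gt hr₂) (ne_of_gt hr₁)]
  have h2int : ∫ t in Set.Ioc r₁ r₂, ξ t / t = ζ r₂ - ζ r₁ := by
    rw [hζ r₂, hζ r₁]
    have hunion : Set.Ioc (0:ℝ) r₁ ∪ Set.Ioc r₁ r₂ = Set.Ioc 0 r₂ :=
      Set.Ioc_union_Ioc_eq_Ioc hr₁.le h12
    rw [← hunion, setIntegral_union (Set.Ioc_disjoint_Ioc_of_le le_rfl) measurableSet_Ioc
      (hξint r₁ hr₁) hxi_int]
    ring
  have hsplit : ∫ t in Set.Ioc r₁ r₂, w t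
      = (Real.log r₂ - Real.log r₁) - (ζ r₂ - ζ r₁) := by
    calc ∫ t in Set.Ioc r₁ r₂, w t = ∫ t in Set.Ioc r₁ r₂, (t⁻¹ - ξ t / t) :=
          setIntegral_congr_fun measurableSet_Ioc (fun t _ => hweq t)
    _ = (∫ t in Set.Ioc r₁ r₂, (t:ℝ)⁻¹) - ∫ t in Set.Ioc r₁ r₂, ξ t / t :=
          integral_sub hinv_int hxi_int
    _ = (Real.log r₂ - Real.log r₁) - (ζ r₂ - ζ r₁) := by rw [h1int, h2int]
  rw [hsplit] at hgron
  -- final real inequality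
  have hM2pos : 0 < M r₂ := hMpos r₂ ⟨h12, le_rfl⟩
  have hexp : Real.exp (ζ r₁) * M r₁ / (2 * r₁) ≤ Real.exp (ζ r₂) * M r₂ / (2 * r₂) := by
    have hkey : ζ r₁ + Real.log (M r₁) - Real.log r₁ ≤ ζ r₂ + Real.log (M r₂) - Real.log r₂ := by
      linarith
    have hexp1 : Real.exp (ζ r₁ + Real.log (M r₁) - Real.log r₁)
        = Real.exp (ζ r₁) * M r₁ / r₁ := by
      rw [Real.exp_sub, Real.exp_add, Real.exp_log hMr₁pos, Real.exp_log hr₁]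
    have hexp2 : Real.exp (ζ r₂ + Real.log (M r₂) - Real.log r₂)
        = Real.exp (ζ r₂) * M r₂ / r₂ := by
      rw [Real.exp_sub, Real.exp_add, Real.exp_log hM2pos, Real.exp_log hr₂]
    have := Real.exp_le_exp.2 hkey
    rw [hexp1, hexp2] at this
    calc Real.exp (ζ r₁) * M r₁ / (2 * r₁) = (Real.exp (ζ r₁) * M r₁ / r₁) / 2 := by
          field_simp
    _ ≤ (Real.exp (ζ r₂) * M r₂ / r₂) / 2 := by linarith
    _ = Real.exp (ζ r₂) * M r₂ / (2 * r₂) := by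
          field_simp
  -- convert to ℝ≥0∞
  have hgoal1 : ENNReal.ofReal (Real.exp (ζ r₁)) * m r₁ / ENNReal.ofReal (2 * r₁)
      = ENNReal.ofReal (Real.exp (ζ r₁) * M r₁ / (2 * r₁)) := by
    rw [← ENNReal.ofReal_toReal (hmfin r₁), ← ENNReal.ofReal_mul (Real.exp_nonneg _),
      ← ENNReal.ofReal_div_of_pos (by linarith)]
  have hgoal2 : ENNReal.ofReal (Real.exp (ζ r₂)) * m r₂ / ENNReal.ofReal (2 * r₂)
      = ENNReal.ofReal (Real.exp (ζ r₂) * M r₂ / (2 * r₂)) := by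
    rw [← ENNReal.ofReal_toReal (hmfin r₂), ← ENNReal.ofReal_mul (Real.exp_nonneg _),
      ← ENNReal.ofReal_div_of_pos (by linarith)]
  show ENNReal.ofReal (Real.exp (ζ r₁)) * m r₁ / ENNReal.ofReal (2 * r₁) ≤
    ENNReal.ofReal (Real.exp (ζ r₂)) * m r₂ / ENNReal.ofReal (2 * r₂)
  rw [hgoal1, hgoal2]
  exact ENNReal.ofReal_le_ofReal hexp
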